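/- (L∞ covering number of linear classes with (2,1)-norm constraints.) Let N, U, d, m be positive integers and a, b, ε > 0. Let X ∈ ℝ^{N×U×d} be a tensor with ‖X_{i,u,·}‖₂ ≤ b for all i ≤ N and u ≤ U, and fix M ∈ ℝ^{d×m}. Then log₂ 𝒩( { XA : A ∈ ℝ^{d×m}, ‖A − M‖_{2,1} ≤ a }, ε, ‖·‖_* ) ≤ (64 a² b² / ε²) · log₂( (8ab/ε + 7) · m N U ). -/

import Mathlib

open scoped BigOperators

/-- Euclidean norm of a vector in `ℝ^q`. -/
noncomputable def eNorm {q : ℕ} (v : Fin q → ℝ) : ℝ := Real.sqrt (∑ i, v i ^ 2)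

namespace S13

noncomputable def dot {d : ℕ} (u v : Fin d → ℝ) : ℝ := ∑ t, u t * v t

lemma dot_self_nonneg {d : ℕ} (u : Fin d → ℝ) : 0 ≤ dot u u :=
  Finset.sum_nonneg fun t _ => mul_self_nonneg _

lemma abs_dot_le {d : ℕ} (u v : Fin d → ℝ) :
    |dot u v| ≤ Real.sqrt (dot u u) * Real.sqrt (dot v v) := by
  have key : ∀ v' : Fin d → ℝ, dot u v' ≤ Real.sqrt (dot u u) * Real.sqrt (dot v' v') := by
    intro v'
    have h := Real.sum_mul_le_sqrt_mul_sqrt Finset.univ u v'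
    have e1 : dot u u = ∑ t, u t ^ 2 := by simp [dot, sq]
    have e2 : dot v' v' = ∑ t, v' t ^ 2 := by simp [dot, sq]
    rw [dot, e1, e2]; exact h
  rcases abs_cases (dot u v) with ⟨h, _⟩ | ⟨h, _⟩
  · rw [h]; exact key v
  · rw [h]
    have h2 := key (fun t => - v t)
    have e3 : dot u (fun t => - v t) = - dot u v := by simp [dot]
    have e4 : dot (fun t => - v t) (fun t => - v t) = dot v v := by simp [dot]
    rw [e3, e4] at h2; exact h2

lemma dot_fun_sub {d : ℕ} (u f g : Fin d → ℝ) :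
    dot u (fun t => f t - g t) = dot u f - dot u g := by
  simp [dot, mul_sub, Finset.sum_sub_distrib]

lemma dot_fun_add {d : ℕ} (u f g : Fin d → ℝ) :
    dot u (fun t => f t + g t) = dot u f + dot u g := by
  simp [dot, mul_add, Finset.sum_add_distrib]

lemma dot_fun_smul {d : ℕ} (u : Fin d → ℝ) (c : ℝ) (f : Fin d → ℝ) :
    dot u (fun t => c * f t) = c * dot u f := by
  simp only [dot, Finset.mul_sum]
  exact Finset.sum_congr rfl fun t _ => by ring

lemma dot_expand {d : ℕ} (w v : Fin d → ℝ) (c : ℝ) :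
    dot (fun t => w t - c * v t) (fun t => w t - c * v t)
      = dot w w - 2 * c * dot v w + c ^ 2 * dot v v := by
  have h : ∀ t, (w t - c * v t) * (w t - c * v t)
      = w t * w t - 2 * c * (v t * w t) + c ^ 2 * (v t * v t) := fun t => by ring
  simp only [dot]
  rw [Finset.sum_congr rfl fun t _ => h t, Finset.sum_add_distrib, Finset.sum_sub_distrib,
    ← Finset.mul_sum, ← Finset.mul_sum]

/-- the vector accumulated by a list of signed `η`-steps -/
noncomputable def vsum {d : ℕ} {ι : Type*} (x : ι → Fin d → ℝ) (η : ℝ) :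
    List (ι × Bool) → Fin d → ℝ
  | [] => fun _ => 0
  | e :: l => fun t => (cond e.2 η (-η)) * x e.1 t + vsum x η l t

/-- Greedy (perceptron-style) sparse approximation. -/
lemma greedy {d : ℕ} {ι : Type*} [Fintype ι] (x : ι → Fin d → ℝ) (b τ η : ℝ)
    (hη : 0 < η) (hτη : η * b ^ 2 ≤ τ) (hx : ∀ p, dot (x p) (x p) ≤ b ^ 2) :
    ∀ (n : ℕ) (w : Fin d → ℝ), dot w w ≤ n * (η * τ) →
      ∃ l : List (ι × Bool), l.length ≤ n ∧
        ∀ p, |dot (x p) (fun t => w t - vsum x η l t)| ≤ τ := by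
  have hτ0 : 0 ≤ τ := le_trans (by positivity) hτη
  intro n
  induction n with
  | zero =>
    intro w hw
    refine ⟨[], le_refl _, fun p => ?_⟩
    have hww : dot w w = 0 := le_antisymm (by simpa using hw) (dot_self_nonneg w)
    have h := abs_dot_le (x p) w
    rw [hww] at h
    simp only [Real.sqrt_zero, mul_zero] at h
    have : |dot (x p) w| ≤ 0 := h
    calc |dot (x p) (fun t => w t - vsum x η [] t)| = |dot (x p) w| := by
          simp [vsum]
      _ ≤ τ := le_trans this hτ0
  | succ n ih =>
    intro w hw
    by_cases hgood : ∀ p, |dot (x p) w| ≤ τ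
    · exact ⟨[], by simp, fun p => by simpa [vsum] using hgood p⟩
    · push_neg at hgood
      obtain ⟨p, hp⟩ := hgood
      set γ : ℝ := if 0 ≤ dot (x p) w then η else -η with hγ
      have hγsq : γ ^ 2 = η ^ 2 := by
        rcases le_or_gt 0 (dot (x p) w) with h | h
        · simp [hγ, if_pos h]
        · simp [hγ, if_neg (not_le.mpr h)]
      have hγdot : η * τ ≤ γ * dot (x p) w := by
        rcases le_or_gt 0 (dot (x p) w) with h | h
        · rw [hγ, if_pos h]
          have : τ < dot (x p) w := by rwa [abs_of_nonneg h] at hp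
          nlinarith
        · rw [hγ, if_neg (not_le.mpr h)]
          have : τ < -(dot (x p) w) := by rwa [abs_of_neg h] at hp
          nlinarith
      set w' : Fin d → ℝ := fun t => w t - γ * x p t with hw'
      have hstep : dot w' w' ≤ n * (η * τ) := by
        have hexp := dot_expand w (x p) γ
        have hxpb : γ ^ 2 * dot (x p) (x p) ≤ η * τ := by
          rw [hγsq]
          calc η ^ 2 * dot (x p) (x p) ≤ η ^ 2 * b ^ 2 := by
                apply mul_le_mul_of_nonneg_left (hx p) (by positivity)
            _ = η * (η * b ^ 2) := by ring
            _ ≤ η * τ := by nlinarith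
        have hsymm : dot (x p) w = dot w (x p) := by
          simp only [dot]; exact Finset.sum_congr rfl fun t _ => by ring
        have : dot w' w' ≤ dot w w - 2 * (η * τ) + η * τ := by
          rw [hw', hexp]
          have h2 : 2 * (η*τ) ≤ 2 * (γ * dot (x p) w) := by linarith
          rw [hsymm] at h2 ⊢
          nlinarith [hxpb]
        push_cast at hw ⊢
        nlinarith
      obtain ⟨l, hl, herr⟩ := ih w' hstep
      refine ⟨(p, decide (0 ≤ dot (x p) w)) :: l, by simpa using hl, fun q => ?_⟩
      have hcond : (cond (decide (0 ≤ dot (x p) w)) η (-η)) = γ := by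
        rcases le_or_gt 0 (dot (x p) w) with h | h
        · simp [hγ, h]
        · simp [hγ, not_le.mpr h, h.not_ge]
      have heq : (fun t => w t - vsum x η ((p, decide (0 ≤ dot (x p) w)) :: l) t)
          = (fun t => w' t - vsum x η l t) := by
        funext t
        simp only [vsum, hcond, hw']
        ring
      rw [heq]
      exact herr q



noncomputable def cfn (J' : ℕ) (η₀ : ℝ) (k : ℕ) : ℝ := ((k : ℝ) - (J' : ℝ)) * η₀

noncomputable def VL {d m : ℕ} {ι : Type*} (x : ι → Fin d → ℝ) (J' : ℕ) (η₀ : ℝ)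
    (L : List (ι × Fin m × ℕ)) (c : Fin m) : Fin d → ℝ :=
  fun t => (L.map (fun e => (if e.2.1 = c then cfn J' η₀ e.2.2 else 0) * x e.1 t)).sum

lemma VL_nil {d m : ℕ} {ι : Type*} (x : ι → Fin d → ℝ) (J' : ℕ) (η₀ : ℝ) (c : Fin m) (t : Fin d) :
    VL x J' η₀ [] c t = 0 := by simp [VL]

lemma VL_append {d m : ℕ} {ι : Type*} (x : ι → Fin d → ℝ) (J' : ℕ) (η₀ : ℝ)
    (L₁ L₂ : List (ι × Fin m × ℕ)) (c : Fin m) (t : Fin d) :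
    VL x J' η₀ (L₁ ++ L₂) c t = VL x J' η₀ L₁ c t + VL x J' η₀ L₂ c t := by
  simp [VL]

lemma VL_eq_zero {d m : ℕ} {ι : Type*} (x : ι → Fin d → ℝ) (J' : ℕ) (η₀ : ℝ)
    (L : List (ι × Fin m × ℕ)) (c : Fin m) (h : ∀ e ∈ L, e.2.1 ≠ c) (t : Fin d) :
    VL x J' η₀ L c t = 0 := by
  apply List.sum_eq_zero
  intro y hy
  obtain ⟨e, he, rfl⟩ := List.mem_map.mp hy
  rw [if_neg (h e he), zero_mul]

lemma dot_VL {d m : ℕ} {ι : Type*} (v : Fin d → ℝ) (x : ι → Fin d → ℝ) (J' : ℕ) (η₀ : ℝ)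
    (L : List (ι × Fin m × ℕ)) (c : Fin m) :
    dot v (VL x J' η₀ L c)
      = (L.map (fun e => (if e.2.1 = c then cfn J' η₀ e.2.2 else 0) * dot v (x e.1))).sum := by
  induction L with
  | nil => simp [dot, VL]
  | cons e L ih =>
    have hcons : VL x J' η₀ (e :: L) c
        = fun t => (if e.2.1 = c then cfn J' η₀ e.2.2 else 0) * x e.1 t + VL x J' η₀ L c t := by
      funext t; simp [VL]
    rw [hcons, dot_fun_add, dot_fun_smul, ih]
    simp

lemma sum_getD {α : Type*} (h : α → ℝ) (dflt : α) (h0 : h dflt = 0) :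
    ∀ (K : ℕ) (L : List α), L.length ≤ K →
      ∑ s : Fin K, h (L.getD s dflt) = (L.map h).sum := by
  intro K L
  induction L generalizing K with
  | nil => intro _; simp [List.getD, h0]
  | cons e L ih =>
    intro hK
    match K with
    | 0 => simp at hK
    | K + 1 =>
      rw [Fin.sum_univ_succ]
      have h1 : ∀ s : Fin K, ((e :: L).getD (↑(Fin.succ s)) dflt) = L.getD (↑s) dflt := by
        intro s; rw [Fin.val_succ, List.getD_cons_succ]
      simp only [h1]
      rw [ih K (by simpa using hK)]
      simp


set_option maxHeartbeats 2000000 in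
/-- Assemble per-column greedy approximations into one global list of quantized updates. -/
lemma assemble {d N U m : ℕ} (a b ε : ℝ) (ha : 0 < a) (hb : 0 < b) (hε : 0 < ε)
    (hab : ε < a * b)
    (x : Fin N × Fin U → Fin d → ℝ) (hx : ∀ p, dot (x p) (x p) ≤ b ^ 2)
    (w : Fin m → Fin d → ℝ) (hw : ∑ c, Real.sqrt (dot (w c) (w c)) ≤ a) :
    ∃ L : List ((Fin N × Fin U) × Fin m × ℕ),
      (L.length : ℝ) ≤ 3 * (a * b / ε) ^ 2 ∧
      (∀ e ∈ L, e.2.2 ≤ 2 * ⌈2 * (a * b / ε)⌉₊) ∧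
      ∀ c p,
        |dot (x p) (fun t =>
          w c t - VL x ⌈2 * (a * b / ε)⌉₊ (ε ^ 2 / (2 * a * b ^ 3)) L c t)|
        ≤ ε * Real.sqrt (Real.sqrt (dot (w c) (w c)) / a) := by
  classical
  set J' : ℕ := ⌈2 * (a * b / ε)⌉₊ with hJ'def
  clear_value J'
  set η₀ : ℝ := ε ^ 2 / (2 * a * b ^ 3) with hη₀def
  clear_value η₀
  set tc : Fin m → ℝ := fun c => Real.sqrt (dot (w c) (w c)) with htc_def
  clear_value tc
  have htc0 : ∀ c, 0 ≤ tc c := by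
    intro c; simp only [htc_def]; exact Real.sqrt_nonneg _
  have htca : ∀ c, tc c ≤ a := by
    intro c
    calc tc c ≤ ∑ c', tc c' :=
          Finset.single_le_sum (fun c' _ => htc0 c') (Finset.mem_univ c)
      _ ≤ a := hw
  have hη₀pos : 0 < η₀ := by rw [hη₀def]; positivity
  have hJ : 2 * (a * b / ε) ≤ (J' : ℝ) := by rw [hJ'def]; exact Nat.le_ceil _
  have main : ∀ S : Finset (Fin m), ∃ L : List ((Fin N × Fin U) × Fin m × ℕ),
      ((L.length : ℝ) ≤ ∑ c ∈ S, 3 * (a * b ^ 2 / ε ^ 2) * tc c) ∧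
      (∀ e ∈ L, e.2.2 ≤ 2 * J') ∧ (∀ e ∈ L, e.2.1 ∈ S) ∧
      ∀ c ∈ S, ∀ p, |dot (x p) (fun t => w c t - VL x J' η₀ L c t)|
          ≤ ε * Real.sqrt (tc c / a) := by
    intro S
    induction S using Finset.induction_on with
    | empty =>
      refine ⟨[], by simp, by simp, by simp, by simp⟩
    | insert c₀ S hc₀ ih =>
      obtain ⟨L_S, hSlen, hSwf, hSmem, hSerr⟩ := ih
      by_cases hact : a * b ^ 2 * tc c₀ ≤ ε ^ 2
      · -- inactive column: approximate by 0
        refine ⟨L_S, ?_, hSwf, ?_, ?_⟩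
        · rw [Finset.sum_insert hc₀]
          have : 0 ≤ 3 * (a * b ^ 2 / ε ^ 2) * tc c₀ :=
            mul_nonneg (by positivity) (htc0 c₀)
          linarith
        · exact fun e he => Finset.mem_insert_of_mem (hSmem e he)
        · intro c hc p
          rcases Finset.mem_insert.mp hc with rfl | hcS
          · have hz : ∀ t, VL x J' η₀ L_S c t = 0 := by
              intro t
              exact VL_eq_zero x J' η₀ L_S c
                (fun e he hcol => hc₀ (hcol ▸ hSmem e he)) t
            have heq : (fun t => w c t - VL x J' η₀ L_S c t) = w c := by
              funext t; rw [hz t, sub_zero]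
            rw [heq]
            have h1 : |dot (x p) (w c)| ≤ b * tc c := by
              have h2 := abs_dot_le (x p) (w c)
              have h3 : Real.sqrt (dot (x p) (x p)) ≤ b := by
                calc Real.sqrt (dot (x p) (x p)) ≤ Real.sqrt (b ^ 2) :=
                      Real.sqrt_le_sqrt (hx p)
                  _ = b := Real.sqrt_sq hb.le
              have h2' : Real.sqrt (dot (w c) (w c)) = tc c := by
                simp only [htc_def]
              rw [h2'] at h2
              calc |dot (x p) (w c)| ≤ Real.sqrt (dot (x p) (x p)) * tc c := h2
                _ ≤ b * tc c := mul_le_mul_of_nonneg_right h3 (htc0 c)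
            have h4 : b * tc c ≤ ε * Real.sqrt (tc c / a) := by
              have h5 : b * tc c / ε ≤ Real.sqrt (tc c / a) := by
                rw [Real.le_sqrt (div_nonneg (mul_nonneg hb.le (htc0 c)) hε.le)
                  (div_nonneg (htc0 c) ha.le)]
                rw [div_pow, div_le_div_iff₀ (by positivity) (by positivity)]
                nlinarith [htc0 c]
              calc b * tc c = ε * (b * tc c / ε) := by field_simp
                _ ≤ ε * Real.sqrt (tc c / a) :=
                    mul_le_mul_of_nonneg_left h5 hε.le
            linarith
          · exact hSerr c hcS p
      · -- active column: greedy sparsification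
        push_neg at hact
        have habsq : 0 < a * b ^ 2 := by positivity
        have hT0pos : 0 < tc c₀ := by nlinarith [htc0 c₀, habsq]
        set s : ℝ := Real.sqrt (tc c₀ / a) with hs_def
        clear_value s
        have hs_sq : s ^ 2 = tc c₀ / a := by
          rw [hs_def]; exact Real.sq_sqrt (div_nonneg (htc0 c₀) ha.le)
        have hs_pos : 0 < s := by
          rw [hs_def]; exact Real.sqrt_pos.mpr (div_pos hT0pos ha)
        have hs_le1 : s ≤ 1 := by
          rw [hs_def]; exact Real.sqrt_le_one.mpr ((div_le_one ha).mpr (htca c₀))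
        have htc_eq : tc c₀ = a * s ^ 2 := by rw [hs_sq]; field_simp
        have hεabs : ε < a * b * s := by
          have h1 : ε ^ 2 < (a * b * s) ^ 2 := by nlinarith
          exact lt_of_pow_lt_pow_left₀ 2 (by positivity) h1
        set ρ : ℝ := 2 * (a * b / ε) * s with hρ_def
        clear_value ρ
        have h2ρ : 2 < ρ := by
          have h : ρ = 2 * (a * b * s) / ε := by rw [hρ_def]; ring
          rw [h, lt_div_iff₀ hε]; linarith
        have hρJ : ρ ≤ (J' : ℝ) := by
          rw [hρ_def]
          calc 2 * (a * b / ε) * s ≤ 2 * (a * b / ε) * 1 :=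
                mul_le_mul_of_nonneg_left hs_le1 (by positivity)
            _ = 2 * (a * b / ε) := by ring
            _ ≤ (J' : ℝ) := hJ
        set j : ℕ := ⌊ρ⌋₊ with hj_def
        clear_value j
        have hjρ : (j : ℝ) ≤ ρ := by rw [hj_def]; exact Nat.floor_le (by linarith)
        have hρj1 : ρ < (j : ℝ) + 1 := by
          rw [hj_def]; exact_mod_cast Nat.lt_floor_add_one ρ
        have hj2 : 2 ≤ j := by rw [hj_def]; exact Nat.le_floor (by exact_mod_cast h2ρ.le)
        have hjJ : j ≤ J' := by
          have h : (j : ℝ) ≤ (J' : ℝ) := le_trans hjρ hρJ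
          exact_mod_cast h
        have hjpos : (0 : ℝ) < (j : ℝ) := by
          have h : 0 < j := by omega
          exact_mod_cast h
        set et : ℝ := (j : ℝ) * η₀ with het_def
        clear_value et
        have hetpos : 0 < et := by rw [het_def]; exact mul_pos hjpos hη₀pos
        have hb2η₀nn : 0 ≤ b ^ 2 * η₀ := mul_nonneg (sq_nonneg b) hη₀pos.le
        have hb2η₀ : ρ * (b ^ 2 * η₀) = ε * s := by
          rw [hρ_def, hη₀def]; field_simp
        have key1 : et * b ^ 2 ≤ ε * s := by
          calc et * b ^ 2 = (j : ℝ) * (b ^ 2 * η₀) := by rw [het_def]; ring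
            _ ≤ ρ * (b ^ 2 * η₀) := mul_le_mul_of_nonneg_right hjρ hb2η₀nn
            _ = ε * s := hb2η₀
        have key2 : ε * s ≤ 2 * (et * b ^ 2) := by
          calc ε * s = ρ * (b ^ 2 * η₀) := hb2η₀.symm
            _ ≤ 2 * (j : ℝ) * (b ^ 2 * η₀) := by
                apply mul_le_mul_of_nonneg_right _ hb2η₀nn
                linarith
            _ = 2 * (et * b ^ 2) := by rw [het_def]; ring
        have hprod_pos : 0 < et * (ε * s) := mul_pos hetpos (mul_pos hε hs_pos)
        set n : ℕ := ⌈tc c₀ ^ 2 / (et * (ε * s))⌉₊ with hn_def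
        clear_value n
        have hnceil : tc c₀ ^ 2 / (et * (ε * s)) ≤ (n : ℝ) := by
          rw [hn_def]; exact Nat.le_ceil _
        have hgrhyp : dot (w c₀) (w c₀) ≤ (n : ℝ) * (et * (ε * s)) := by
          have h1 : tc c₀ ^ 2 = dot (w c₀) (w c₀) := by
            simp only [htc_def]; exact Real.sq_sqrt (dot_self_nonneg _)
          rw [← h1]
          exact (div_le_iff₀ hprod_pos).mp hnceil
        obtain ⟨l, hllen, herr⟩ := greedy x b (ε * s) et hetpos key1 hx n (w c₀) hgrhyp
        -- bound (n : ℝ)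
        have hlow : ε ^ 2 * tc c₀ / (2 * a * b ^ 2) ≤ et * (ε * s) := by
          have h1 : (ε * s) ^ 2 / (2 * b ^ 2) ≤ et * (ε * s) := by
            rw [div_le_iff₀ (by positivity)]
            nlinarith [mul_pos hε hs_pos]
          have h2 : (ε * s) ^ 2 / (2 * b ^ 2) = ε ^ 2 * tc c₀ / (2 * a * b ^ 2) := by
            rw [mul_pow, hs_sq]; field_simp
          linarith
        have hn3 : (n : ℝ) ≤ 3 * (a * b ^ 2 / ε ^ 2) * tc c₀ := by
          have hceil : (n : ℝ) < tc c₀ ^ 2 / (et * (ε * s)) + 1 := by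
            rw [hn_def]
            exact Nat.ceil_lt_add_one (div_nonneg (sq_nonneg _) hprod_pos.le)
          have hC : (0 : ℝ) ≤ 2 * (a * b ^ 2 / ε ^ 2) * tc c₀ :=
            mul_nonneg (by positivity) (htc0 c₀)
          have hmul := mul_le_mul_of_nonneg_right hlow hC
          have heq : ε ^ 2 * tc c₀ / (2 * a * b ^ 2) * (2 * (a * b ^ 2 / ε ^ 2) * tc c₀)
              = tc c₀ ^ 2 := by field_simp
          have hdiv : tc c₀ ^ 2 / (et * (ε * s)) ≤ 2 * (a * b ^ 2 / ε ^ 2) * tc c₀ := by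
            rw [div_le_iff₀ hprod_pos]
            calc tc c₀ ^ 2 = ε ^ 2 * tc c₀ / (2 * a * b ^ 2)
                  * (2 * (a * b ^ 2 / ε ^ 2) * tc c₀) := heq.symm
              _ ≤ et * (ε * s) * (2 * (a * b ^ 2 / ε ^ 2) * tc c₀) := hmul
              _ = 2 * (a * b ^ 2 / ε ^ 2) * tc c₀ * (et * (ε * s)) := by ring
          have h1active : 1 ≤ a * b ^ 2 / ε ^ 2 * tc c₀ := by
            rw [show a * b ^ 2 / ε ^ 2 * tc c₀ = a * b ^ 2 * tc c₀ / ε ^ 2 by ring,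
              le_div_iff₀ (by positivity)]
            linarith
          linarith
        -- build the mapped list
        set φ : (Fin N × Fin U) × Bool → (Fin N × Fin U) × Fin m × ℕ :=
          fun e => (e.1, c₀, if e.2 then J' + j else J' - j) with hφ_def
        have hVLmap : ∀ (l' : List ((Fin N × Fin U) × Bool)) (t : Fin d),
            VL x J' η₀ (l'.map φ) c₀ t = vsum x et l' t := by
          intro l'
          induction l' with
          | nil => intro t; simp [VL, vsum]
          | cons e l' ih' =>
            intro t
            have hcfn : cfn J' η₀ (if e.2 then J' + j else J' - j)
                = (cond e.2 et (-et)) := by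
              cases e.2 with
              | true =>
                simp only [if_true, cond_true, cfn, het_def]
                push_cast
                ring
              | false =>
                simp only [cond_false, cfn, het_def]
                rw [if_neg Bool.false_ne_true, Nat.cast_sub hjJ]
                ring
            have h1 : VL x J' η₀ ((e :: l').map φ) c₀ t
                = cfn J' η₀ (if e.2 then J' + j else J' - j) * x e.1 t
                  + VL x J' η₀ (l'.map φ) c₀ t := by
              simp [VL, hφ_def]
            rw [h1, hcfn, ih']
            simp [vsum]
        refine ⟨(l.map φ) ++ L_S, ?_, ?_, ?_, ?_⟩
        · rw [Finset.sum_insert hc₀]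
          have h1 : (((l.map φ) ++ L_S).length : ℝ) = (l.length : ℝ) + L_S.length := by
            push_cast [List.length_append, List.length_map]
            ring
          have h2 : (l.length : ℝ) ≤ (n : ℝ) := by exact_mod_cast hllen
          linarith
        · intro e he
          rcases List.mem_append.mp he with h | h
          · obtain ⟨e', _, rfl⟩ := List.mem_map.mp h
            simp only [hφ_def]
            split <;> omega
          · exact hSwf e h
        · intro e he
          rcases List.mem_append.mp he with h | h
          · obtain ⟨e', _, rfl⟩ := List.mem_map.mp h
            simp only [hφ_def]
            exact Finset.mem_insert_self c₀ S
          · exact Finset.mem_insert_of_mem (hSmem e h)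
        · intro c hc p
          rcases Finset.mem_insert.mp hc with rfl | hcS
          · have hz : ∀ t, VL x J' η₀ L_S c t = 0 := fun t =>
              VL_eq_zero x J' η₀ L_S c (fun e he hcol => hc₀ (hcol ▸ hSmem e he)) t
            have heq : (fun t => w c t - VL x J' η₀ ((l.map φ) ++ L_S) c t)
                = (fun t => w c t - vsum x et l t) := by
              funext t
              rw [VL_append, hVLmap, hz, add_zero]
            rw [heq, ← hs_def]
            exact herr p
          · have hcne : c ≠ c₀ := fun h => hc₀ (h ▸ hcS)
            have hz : ∀ t, VL x J' η₀ (l.map φ) c t = 0 := by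
              intro t
              apply VL_eq_zero
              intro e he
              obtain ⟨e', _, rfl⟩ := List.mem_map.mp he
              simp only [hφ_def]
              exact fun h => hcne h.symm
            have heq : (fun t => w c t - VL x J' η₀ ((l.map φ) ++ L_S) c t)
                = (fun t => w c t - VL x J' η₀ L_S c t) := by
              funext t
              rw [VL_append, hz, zero_add]
            rw [heq]
            exact hSerr c hcS p
  obtain ⟨L, hlen, hwf, _, herr⟩ := main Finset.univ
  refine ⟨L, ?_, hwf, fun c p => ?_⟩
  · calc (L.length : ℝ) ≤ ∑ c, 3 * (a * b ^ 2 / ε ^ 2) * tc c := hlen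
      _ = 3 * (a * b ^ 2 / ε ^ 2) * ∑ c, tc c := by rw [Finset.mul_sum]
      _ ≤ 3 * (a * b ^ 2 / ε ^ 2) * a :=
          mul_le_mul_of_nonneg_left hw (by positivity)
      _ = 3 * (a * b / ε) ^ 2 := by field_simp
  · have h := herr c (Finset.mem_univ c) p
    simp only [htc_def] at h
    exact h

end S13

open S13 in
set_option maxHeartbeats 2000000 in
/-- `L∞` covering number of linear classes with `(2,1)`-norm
constraints.  Let `X ∈ ℝ^{N×U×d}` with `‖X_{i,u,·}‖₂ ≤ b` and fix `M ∈ ℝ^{d×m}`.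
Then the class `{XA : ‖A − M‖_{2,1} ≤ a}` (where `(XA)_{i,u,·} = Aᵀ X_{i,u,·}` and
`‖A‖_{2,1}` is the sum over columns of `A` of their Euclidean norms) admits, for every
`ε > 0`, an `ε`-cover in the norm `‖Y‖_* = max_{i,u} ‖Y_{i,u,·}‖₂` whose cardinality
`𝒩` satisfies `log₂ 𝒩 ≤ (64a²b²/ε²) · log₂((8ab/ε + 7)·mNU)`. -/
theorem stmt_13 (N U d m : ℕ) (hN : 0 < N) (hU : 0 < U) (hd : 0 < d) (hm : 0 < m)
    (a b ε : ℝ) (ha : 0 < a) (hb : 0 < b) (hε : 0 < ε)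
    (X : Fin N → Fin U → Fin d → ℝ) (hX : ∀ i u', eNorm (X i u') ≤ b)
    (M : Matrix (Fin d) (Fin m) ℝ) :
    ∃ C : Finset (Fin N → Fin U → Fin m → ℝ),
      (∀ A : Matrix (Fin d) (Fin m) ℝ,
        (∑ c : Fin m, eNorm (fun i => A i c - M i c)) ≤ a →
        ∃ Y ∈ C, ∀ i u', eNorm (fun c => (∑ t, X i u' t * A t c) - Y i u' c) ≤ ε) ∧
      Real.logb 2 C.card ≤
        (64 * a ^ 2 * b ^ 2 / ε ^ 2) *
          Real.logb 2 ((8 * a * b / ε + 7) * (m * N * U)) := by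
  classical
  have heNorm : ∀ (q : ℕ) (v : Fin q → ℝ), eNorm v = Real.sqrt (dot v v) := by
    intro q v; simp [eNorm, dot, pow_two]
  have hm1 : (1 : ℝ) ≤ (m : ℝ) := by exact_mod_cast hm
  have hN1 : (1 : ℝ) ≤ (N : ℝ) := by exact_mod_cast hN
  have hU1 : (1 : ℝ) ≤ (U : ℝ) := by exact_mod_cast hU
  have hRHSarg : (1 : ℝ) ≤ (8 * a * b / ε + 7) * ((m : ℝ) * (N : ℝ) * (U : ℝ)) := by
    have h1 : 0 ≤ 8 * a * b / ε := by positivity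
    nlinarith [mul_le_mul hm1 hN1 (by linarith) (by linarith : (0:ℝ) ≤ (m:ℝ)),
      mul_le_mul (le_refl ((m:ℝ)*(N:ℝ))) hU1 (by linarith) (by positivity)]
  have hlogRHSnn : 0 ≤ Real.logb 2 ((8 * a * b / ε + 7) * ((m : ℝ) * (N : ℝ) * (U : ℝ))) :=
    Real.logb_nonneg one_lt_two hRHSarg
  have hxb : ∀ (i : Fin N) (u' : Fin U), dot (X i u') (X i u') ≤ b ^ 2 := by
    intro i u'
    have h1 : Real.sqrt (dot (X i u') (X i u')) ≤ b := by
      rw [← heNorm]; exact hX i u'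
    have h2 : dot (X i u') (X i u')
        = Real.sqrt (dot (X i u') (X i u')) ^ 2 :=
      (Real.sq_sqrt (dot_self_nonneg _)).symm
    rw [h2]
    exact pow_le_pow_left₀ (Real.sqrt_nonneg _) h1 2
  by_cases hcase : a * b ≤ ε
  · -- trivial singleton cover
    refine ⟨{fun i u c => ∑ t, X i u t * M t c}, ?_, ?_⟩
    · intro A hA
      refine ⟨_, Finset.mem_singleton_self _, fun i u' => ?_⟩
      have herr : ∀ c, (∑ t, X i u' t * A t c) - (∑ t, X i u' t * M t c)
          = dot (X i u') (fun t => A t c - M t c) := by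
        intro c; simp [dot, mul_sub, Finset.sum_sub_distrib]
      have habs : ∀ c, |dot (X i u') (fun t => A t c - M t c)|
          ≤ b * eNorm (fun t => A t c - M t c) := by
        intro c
        have h2 := abs_dot_le (X i u') (fun t => A t c - M t c)
        rw [heNorm]
        calc |dot (X i u') (fun t => A t c - M t c)|
            ≤ Real.sqrt (dot (X i u') (X i u'))
              * Real.sqrt (dot (fun t => A t c - M t c) (fun t => A t c - M t c)) := h2
          _ ≤ b * Real.sqrt (dot (fun t => A t c - M t c) (fun t => A t c - M t c)) := by
              apply mul_le_mul_of_nonneg_right _ (Real.sqrt_nonneg _)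
              calc Real.sqrt (dot (X i u') (X i u')) ≤ Real.sqrt (b ^ 2) :=
                    Real.sqrt_le_sqrt (hxb i u')
                _ = b := Real.sqrt_sq hb.le
      have hsum : ∑ c, b * eNorm (fun t : Fin d => A t c - M t c) ≤ b * a := by
        rw [← Finset.mul_sum]
        exact mul_le_mul_of_nonneg_left hA hb.le
      rw [show (fun c => (∑ t, X i u' t * A t c) - (fun i u c => ∑ t, X i u t * M t c) i u' c)
          = fun c => dot (X i u') (fun t => A t c - M t c) from funext fun c => herr c]
      rw [eNorm]
      have hterm : ∀ c ∈ Finset.univ, (dot (X i u') (fun t => A t c - M t c)) ^ 2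
          ≤ (b * eNorm (fun t : Fin d => A t c - M t c)) ^ 2 := by
        intro c _
        rw [← sq_abs]
        exact pow_le_pow_left₀ (abs_nonneg _) (habs c) 2
      calc Real.sqrt (∑ c, (dot (X i u') (fun t => A t c - M t c)) ^ 2)
          ≤ Real.sqrt (∑ c, (b * eNorm (fun t : Fin d => A t c - M t c)) ^ 2) :=
            Real.sqrt_le_sqrt (Finset.sum_le_sum hterm)
        _ ≤ Real.sqrt ((∑ c, b * eNorm (fun t : Fin d => A t c - M t c)) ^ 2) := by
            apply Real.sqrt_le_sqrt
            apply Finset.sum_sq_le_sq_sum_of_nonneg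
            intro c _
            have : 0 ≤ eNorm (fun t : Fin d => A t c - M t c) := by
              rw [heNorm]; exact Real.sqrt_nonneg _
            positivity
        _ = ∑ c, b * eNorm (fun t : Fin d => A t c - M t c) := by
            apply Real.sqrt_sq
            apply Finset.sum_nonneg
            intro c _
            have : 0 ≤ eNorm (fun t : Fin d => A t c - M t c) := by
              rw [heNorm]; exact Real.sqrt_nonneg _
            positivity
        _ ≤ b * a := hsum
        _ ≤ ε := by nlinarith
    · rw [Finset.card_singleton]
      have : Real.logb 2 ((1 : ℕ) : ℝ) = 0 := by norm_num
      rw [this]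
      push_cast
      exact mul_nonneg (by positivity) hlogRHSnn
  · -- greedy sparsified cover
    have hab : ε < a * b := not_le.mp hcase
    set J' : ℕ := ⌈2 * (a * b / ε)⌉₊ with hJ'def
    set K : ℕ := ⌈3 * (a * b / ε) ^ 2⌉₊ with hK_def
    set η₀ : ℝ := ε ^ 2 / (2 * a * b ^ 3) with hη₀def
    set x : Fin N × Fin U → Fin d → ℝ := fun p => X p.1 p.2 with hx_def
    set G : (Fin K → (Fin N × Fin U) × Fin m × Fin (2 * J' + 1))
        → (Fin N → Fin U → Fin m → ℝ) :=
      fun f i u c => (∑ t, X i u t * M t c)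
        + ∑ s : Fin K, (if (f s).2.1 = c then cfn J' η₀ ((f s).2.2 : ℕ) else 0)
            * dot (X i u) (x (f s).1) with hG_def
    refine ⟨Finset.image G Finset.univ, ?_, ?_⟩
    · intro A hA
      set w : Fin m → Fin d → ℝ := fun c t => A t c - M t c with hw_def
      have hw : ∑ c, Real.sqrt (dot (w c) (w c)) ≤ a := by
        have he : ∀ c, Real.sqrt (dot (w c) (w c)) = eNorm (fun i => A i c - M i c) := by
          intro c; rw [heNorm]
        calc ∑ c, Real.sqrt (dot (w c) (w c))
            = ∑ c, eNorm (fun i => A i c - M i c) := Finset.sum_congr rfl fun c _ => he c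
          _ ≤ a := hA
      have hxb' : ∀ p : Fin N × Fin U, dot (x p) (x p) ≤ b ^ 2 := by
        intro p; simp only [hx_def]; exact hxb p.1 p.2
      obtain ⟨L, hLlen, hLwf, hLerr⟩ := assemble a b ε ha hb hε hab x hxb' w hw
      set dfltE : (Fin N × Fin U) × Fin m × ℕ := ((⟨0, hN⟩, ⟨0, hU⟩), ⟨0, hm⟩, J')
        with hdfltE_def
      set f : Fin K → (Fin N × Fin U) × Fin m × Fin (2 * J' + 1) := fun s0 =>
        ((L.getD s0 dfltE).1, (L.getD s0 dfltE).2.1,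
          ⟨(L.getD s0 dfltE).2.2 % (2 * J' + 1), Nat.mod_lt _ (by omega)⟩) with hf_def
      have hlenK : L.length ≤ K := by
        have h1 : (L.length : ℝ) ≤ ((K : ℕ) : ℝ) := by
          calc (L.length : ℝ) ≤ 3 * (a * b / ε) ^ 2 := hLlen
            _ ≤ ((K : ℕ) : ℝ) := by rw [hK_def]; exact Nat.le_ceil _
        exact_mod_cast h1
      have hwfD : ∀ s0 : Fin K, (L.getD (s0 : ℕ) dfltE).2.2 ≤ 2 * J' := by
        intro s0
        rcases lt_or_ge (s0 : ℕ) L.length with h | h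
        · rw [List.getD_eq_getElem L dfltE h]
          exact hLwf _ (List.getElem_mem h)
        · rw [List.getD_eq_default L dfltE (by omega)]
          simp only [hdfltE_def]
          omega
      refine ⟨G f, Finset.mem_image_of_mem G (Finset.mem_univ f), ?_⟩
      intro i u'
      have hGf : ∀ c, G f i u' c = (∑ t, X i u' t * M t c)
          + dot (X i u') (VL x J' η₀ L c) := by
        intro c
        simp only [hG_def]
        congr 1
        have h1 : ∀ s0 : Fin K,
            (if (f s0).2.1 = c then cfn J' η₀ ((f s0).2.2 : ℕ) else 0)
              * dot (X i u') (x (f s0).1)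
            = (if (L.getD (s0 : ℕ) dfltE).2.1 = c
                then cfn J' η₀ (L.getD (s0 : ℕ) dfltE).2.2 else 0)
              * dot (X i u') (x (L.getD (s0 : ℕ) dfltE).1) := by
          intro s0
          have hmd : (L.getD (s0 : ℕ) dfltE).2.2 % (2 * J' + 1)
              = (L.getD (s0 : ℕ) dfltE).2.2 :=
            Nat.mod_eq_of_lt (by have := hwfD s0; omega)
          simp only [hf_def, hmd]
        rw [Finset.sum_congr rfl fun s0 _ => h1 s0]
        rw [sum_getD (fun e => (if e.2.1 = c then cfn J' η₀ e.2.2 else 0)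
              * dot (X i u') (x e.1)) dfltE (by simp [hdfltE_def, cfn]) K L hlenK]
        exact (dot_VL (X i u') x J' η₀ L c).symm
      have hpt : ∀ c, (∑ t, X i u' t * A t c) - G f i u' c
          = dot (X i u') (fun t => w c t - VL x J' η₀ L c t) := by
        intro c
        rw [hGf c, dot_fun_sub]
        have h2 : dot (X i u') (w c) = (∑ t, X i u' t * A t c) - (∑ t, X i u' t * M t c) := by
          simp only [hw_def]
          simp [dot, mul_sub, Finset.sum_sub_distrib]
        rw [h2]
        ring
      have herr2 : ∀ c, |dot (X i u') (fun t => w c t - VL x J' η₀ L c t)|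
          ≤ ε * Real.sqrt (Real.sqrt (dot (w c) (w c)) / a) := by
        intro c
        have h := hLerr c (i, u')
        simpa [hx_def] using h
      rw [show (fun c => (∑ t, X i u' t * A t c) - G f i u' c)
          = fun c => dot (X i u') (fun t => w c t - VL x J' η₀ L c t)
          from funext fun c => hpt c]
      rw [eNorm]
      have htc0 : ∀ c, (0:ℝ) ≤ Real.sqrt (dot (w c) (w c)) := fun c => Real.sqrt_nonneg _
      calc Real.sqrt (∑ c, (dot (X i u') (fun t => w c t - VL x J' η₀ L c t)) ^ 2)
          ≤ Real.sqrt (∑ c, ε ^ 2 * (Real.sqrt (dot (w c) (w c)) / a)) := by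
            apply Real.sqrt_le_sqrt
            apply Finset.sum_le_sum
            intro c _
            have h1 := herr2 c
            have h2 : (dot (X i u') (fun t => w c t - VL x J' η₀ L c t)) ^ 2
                ≤ (ε * Real.sqrt (Real.sqrt (dot (w c) (w c)) / a)) ^ 2 := by
              rw [← sq_abs]
              exact pow_le_pow_left₀ (abs_nonneg _) h1 2
            calc (dot (X i u') (fun t => w c t - VL x J' η₀ L c t)) ^ 2
                ≤ (ε * Real.sqrt (Real.sqrt (dot (w c) (w c)) / a)) ^ 2 := h2
              _ = ε ^ 2 * (Real.sqrt (dot (w c) (w c)) / a) := by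
                  rw [mul_pow, Real.sq_sqrt (div_nonneg (htc0 c) ha.le)]
        _ ≤ Real.sqrt (ε ^ 2) := by
            apply Real.sqrt_le_sqrt
            have h3 : ∑ c, ε ^ 2 * (Real.sqrt (dot (w c) (w c)) / a)
                = ε ^ 2 / a * ∑ c, Real.sqrt (dot (w c) (w c)) := by
              rw [Finset.mul_sum]
              exact Finset.sum_congr rfl fun c _ => by ring
            rw [h3]
            calc ε ^ 2 / a * ∑ c, Real.sqrt (dot (w c) (w c)) ≤ ε ^ 2 / a * a :=
                  mul_le_mul_of_nonneg_left hw (by positivity)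
              _ = ε ^ 2 := by field_simp
        _ = ε := Real.sqrt_sq hε.le
    · -- cardinality bound
      have hne : (Finset.image G Finset.univ).Nonempty := by
        refine ⟨G (fun _ => ((⟨0, hN⟩, ⟨0, hU⟩), ⟨0, hm⟩, ⟨0, by omega⟩)), ?_⟩
        exact Finset.mem_image_of_mem G (Finset.mem_univ _)
      have hcard : (Finset.image G Finset.univ).card ≤ (N * U * (m * (2 * J' + 1))) ^ K := by
        calc (Finset.image G Finset.univ).card ≤ Finset.univ.card := Finset.card_image_le
          _ = (N * U * (m * (2 * J' + 1))) ^ K := by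
              rw [Finset.card_univ]
              simp [Fintype.card_fun, Fintype.card_prod, Fintype.card_fin]
      have hcard1 : 0 < (Finset.image G Finset.univ).card := Finset.card_pos.mpr hne
      have hJ'cast : (J' : ℝ) < 2 * (a * b / ε) + 1 := by
        rw [hJ'def]; exact Nat.ceil_lt_add_one (by positivity)
      have hbase1 : (1 : ℝ) ≤ ((N * U * (m * (2 * J' + 1)) : ℕ) : ℝ) := by
        have : 0 < N * U * (m * (2 * J' + 1)) := by positivity
        exact_mod_cast this
      have hbase : ((N * U * (m * (2 * J' + 1)) : ℕ) : ℝ)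
          ≤ (8 * a * b / ε + 7) * ((m : ℝ) * (N : ℝ) * (U : ℝ)) := by
        push_cast
        have hr : 0 < a * b / ε := by positivity
        have h2 : 2 * (J' : ℝ) + 1 ≤ 8 * a * b / ε + 7 := by
          have : 8 * a * b / ε = 8 * (a * b / ε) := by ring
          rw [this]
          linarith
        have h3 : (0:ℝ) ≤ (m : ℝ) * (N : ℝ) * (U : ℝ) := by positivity
        calc (N : ℝ) * U * ((m : ℝ) * (2 * (J' : ℝ) + 1))
            = (2 * (J' : ℝ) + 1) * ((m : ℝ) * N * U) := by ring
          _ ≤ (8 * a * b / ε + 7) * ((m : ℝ) * N * U) :=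
              mul_le_mul_of_nonneg_right h2 h3
      have hKle : (K : ℝ) ≤ 64 * a ^ 2 * b ^ 2 / ε ^ 2 := by
        have hKlt : (K : ℝ) < 3 * (a * b / ε) ^ 2 + 1 := by
          rw [hK_def]; exact Nat.ceil_lt_add_one (by positivity)
        have hr1 : 1 < a * b / ε := (one_lt_div hε).mpr hab
        have heq : 64 * a ^ 2 * b ^ 2 / ε ^ 2 = 64 * (a * b / ε) ^ 2 := by
          rw [div_pow]; ring
        rw [heq]
        nlinarith [sq_nonneg (a * b / ε - 1)]
      calc Real.logb 2 (Finset.image G Finset.univ).card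
          ≤ Real.logb 2 (((N * U * (m * (2 * J' + 1))) ^ K : ℕ) : ℝ) := by
            apply Real.logb_le_logb_of_le one_lt_two
            · exact_mod_cast hcard1
            · exact_mod_cast hcard
        _ = (K : ℝ) * Real.logb 2 ((N * U * (m * (2 * J' + 1)) : ℕ) : ℝ) := by
            push_cast
            rw [Real.logb_pow]
        _ ≤ (K : ℝ) * Real.logb 2 ((8 * a * b / ε + 7) * ((m : ℝ) * (N : ℝ) * (U : ℝ))) := by
            apply mul_le_mul_of_nonneg_left _ (by positivity)
            apply Real.logb_le_logb_of_le one_lt_two (by linarith) hbase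
        _ ≤ (64 * a ^ 2 * b ^ 2 / ε ^ 2)
              * Real.logb 2 ((8 * a * b / ε + 7) * ((m : ℝ) * (N : ℝ) * (U : ℝ))) :=
            mul_le_mul_of_nonneg_right hKle hlogRHSnn
        _ = (64 * a ^ 2 * b ^ 2 / ε ^ 2)
              * Real.logb 2 ((8 * a * b / ε + 7) * ((m : ℕ) * (N : ℕ) * (U : ℕ) : ℝ)) := by
            push_cast
            ring_nf
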